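/- Let M = Λ + N where Λ is a negative diagonal matrix and N is an irreducible nonnegative matrix. Then the spectral abscissa of M is negative if and only if the spectral radius of -Λ⁻¹N is less than 1. -/

import Mathlib

open Matrix

/-- The spectral abscissa of a real matrix. -/
noncomputable def spectralAbscissa {ι : Type*} [Fintype ι] [DecidableEq ι]
    (A : Matrix ι ι ℝ) : ℝ :=
  sSup (Complex.re '' spectrum ℂ (A.map (Complex.ofReal)))

/-- The spectral radius of a real matrix. -/
noncomputable def spectralRadius' {ι : Type*} [Fintype ι] [DecidableEq ι]
    (A : Matrix ι ι ℝ) : ℝ :=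
  sSup ((fun z : ℂ => ‖z‖) '' spectrum ℂ (A.map (Complex.ofReal)))

/-- A matrix is irreducible if its associated directed graph is strongly connected. -/
def IsIrreducibleMatrix {ι : Type*} (A : Matrix ι ι ℝ) : Prop :=
  ∀ S : Set ι, S.Nonempty → S ≠ Set.univ → ∃ i ∉ S, ∃ j ∈ S, A i j ≠ 0


open Matrix Module.End Filter Topology


section Helpers
variable {n : ℕ}

lemma matrix_mem_spectrum_iff {m : Type*} [Fintype m] [DecidableEq m] {K : Type*} [Field K]
    (M : Matrix m m K) (μ : K) :
    μ ∈ spectrum K M ↔ ∃ v, v ≠ 0 ∧ M.mulVec v = μ • v := by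
  rw [← AlgEquiv.spectrum_eq Matrix.toLinAlgEquiv', ← hasEigenvalue_iff_mem_spectrum]
  constructor
  · intro h
    obtain ⟨v, hv⟩ := h.exists_hasEigenvector
    exact ⟨v, hv.2, by simpa [Matrix.toLinAlgEquiv'_apply, toLin'_apply] using hv.apply_eq_smul⟩
  · rintro ⟨v, hv0, hv⟩
    exact hasEigenvalue_of_hasEigenvector ⟨mem_eigenspace_iff.mpr
      (by simpa [Matrix.toLinAlgEquiv'_apply, toLin'_apply] using hv), hv0⟩

lemma mulVec_map_ofReal (A : Matrix (Fin n) (Fin n) ℝ) (x : Fin n → ℝ) :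
    (A.map (Complex.ofReal)).mulVec (fun i => (x i : ℂ)) = fun i => ((A.mulVec x i : ℝ) : ℂ) := by
  ext i
  simp [mulVec, dotProduct]

lemma real_eig_mem_spectrum (A : Matrix (Fin n) (Fin n) ℝ) (r : ℝ) (x : Fin n → ℝ)
    (hx : x ≠ 0) (h : A.mulVec x = r • x) :
    (r : ℂ) ∈ spectrum ℂ (A.map (Complex.ofReal)) := by
  rw [matrix_mem_spectrum_iff]
  refine ⟨fun i => (x i : ℂ), ?_, ?_⟩
  · intro hc
    apply hx
    ext i
    simpa using congrFun hc i
  · rw [mulVec_map_ofReal, h]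
    ext i
    simp

lemma mulVec_nonneg {A : Matrix (Fin n) (Fin n) ℝ} (hA : ∀ i j, 0 ≤ A i j)
    {x : Fin n → ℝ} (hx : 0 ≤ x) : 0 ≤ A.mulVec x := by
  intro i
  simp only [mulVec, dotProduct, Pi.zero_apply]
  exact Finset.sum_nonneg fun j _ => mul_nonneg (hA i j) (hx j)

lemma mulVec_mono {A : Matrix (Fin n) (Fin n) ℝ} (hA : ∀ i j, 0 ≤ A i j)
    {x y : Fin n → ℝ} (hxy : x ≤ y) : A.mulVec x ≤ A.mulVec y := by
  intro i
  simp only [mulVec, dotProduct]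
  exact Finset.sum_le_sum fun j _ => mul_le_mul_of_nonneg_left (hxy j) (hA i j)

lemma pow_nonneg_entries {A : Matrix (Fin n) (Fin n) ℝ} (hA : ∀ i j, 0 ≤ A i j) (k : ℕ) (hk : k ≠ 0) :
    ∀ i j, 0 ≤ (A ^ k) i j := by
  induction k with
  | zero => simp at hk
  | succ m ih =>
    rcases eq_or_ne m 0 with hm | hm
    · subst hm; simpa using hA
    · intro i j
      rw [pow_succ, Matrix.mul_apply]
      exact Finset.sum_nonneg fun l _ => mul_nonneg (ih hm i l) (hA l j)
end Helpers

attribute [local instance] Matrix.linftyOpNormedRing Matrix.linftyOpNormedAlgebra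

section Subinv
variable {n : ℕ}

lemma norm_map_ofReal_pow (A : Matrix (Fin n) (Fin n) ℝ) (k : ℕ) :
    ‖(A.map (Complex.ofReal)) ^ k‖ = ‖A ^ k‖ := by
  have h1 : (A.map (Complex.ofReal)) ^ k = (A ^ k).map (Complex.ofReal) := by
    have := map_pow (Complex.ofRealHom.mapMatrix (m := Fin n)) A k
    exact this.symm
  rw [h1, Matrix.linfty_opNorm_def, Matrix.linfty_opNorm_def]
  norm_cast
  simp only [Matrix.map_apply, Complex.nnnorm_real]

lemma exists_spectrum_abs_ge (A : Matrix (Fin n) (Fin n) ℝ) (hA : ∀ i j, 0 ≤ A i j)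
    (c : ℝ) (hc : 0 ≤ c) (x : Fin n → ℝ) (hx0 : 0 ≤ x) (hxne : x ≠ 0)
    (hsub : c • x ≤ A.mulVec x) :
    ∃ μ ∈ spectrum ℂ (A.map (Complex.ofReal)), c ≤ ‖μ‖ := by
  obtain ⟨i0, hi0⟩ : ∃ i, 0 < x i := by
    by_contra hcon
    push_neg at hcon
    exact hxne (le_antisymm (fun i => hcon i) hx0)
  haveI : Nonempty (Fin n) := ⟨i0⟩
  haveI : Nontrivial (Matrix (Fin n) (Fin n) ℂ) :=
    ⟨0, 1, fun h => by simpa [Matrix.one_apply_eq] using congrFun (congrFun h i0) i0⟩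
  set A' := A.map (Complex.ofReal) with hA'
  have hxnorm : 0 < ‖x‖ := by
    have h1 := le_abs_self (x i0)
    have h2 := norm_le_pi_norm x i0
    simp only [Real.norm_eq_abs] at h2
    linarith
  set d : ℝ := x i0 / ‖x‖ with hd
  have hd0 : 0 < d := div_pos hi0 hxnorm
  have hpow : ∀ k : ℕ, c ^ k • x ≤ (A ^ k).mulVec x := by
    intro k
    induction k with
    | zero => simp [Matrix.one_mulVec]
    | succ m ih =>
      calc c ^ (m + 1) • x = c ^ m • (c • x) := by rw [smul_smul, ← pow_succ]
        _ ≤ c ^ m • A.mulVec x := smul_le_smul_of_nonneg_left hsub (pow_nonneg hc m)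
        _ = A.mulVec (c ^ m • x) := by rw [Matrix.mulVec_smul]
        _ ≤ A.mulVec ((A ^ m).mulVec x) := mulVec_mono hA ih
        _ = (A ^ (m + 1)).mulVec x := by rw [Matrix.mulVec_mulVec, ← pow_succ']
  have key : ∀ k : ℕ, c ^ k * d ≤ ‖A ^ k‖ := by
    intro k
    have h1 : c ^ k * x i0 ≤ ((A ^ k).mulVec x) i0 := hpow k i0
    have h2 : ((A ^ k).mulVec x) i0 ≤ ‖(A ^ k).mulVec x‖ := by
      have := norm_le_pi_norm ((A ^ k).mulVec x) i0
      simp only [Real.norm_eq_abs] at this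
      exact (le_abs_self _).trans this
    have h3 : ‖(A ^ k).mulVec x‖ ≤ ‖A ^ k‖ * ‖x‖ := Matrix.linfty_opNorm_mulVec _ _
    rw [hd, mul_div_assoc']
    rw [div_le_iff₀ hxnorm]
    linarith
  have hbound : ∀ k : ℕ, 1 ≤ k → c * d ^ (1 / (k : ℝ)) ≤ ‖A' ^ k‖ ^ (1 / (k : ℝ)) := by
    intro k hk
    have hk0 : (k : ℝ) ≠ 0 := Nat.cast_ne_zero.mpr (by omega)
    have h1 : (c ^ k * d) ^ (1 / (k : ℝ)) ≤ ‖A ^ k‖ ^ (1 / (k : ℝ)) :=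
      Real.rpow_le_rpow (mul_nonneg (pow_nonneg hc k) hd0.le) (key k)
        (by positivity)
    have h2 : (c ^ k * d) ^ (1 / (k : ℝ)) = c * d ^ (1 / (k : ℝ)) := by
      rw [Real.mul_rpow (pow_nonneg hc k) hd0.le, ← Real.rpow_natCast c k,
        ← Real.rpow_mul hc, mul_one_div_cancel hk0, Real.rpow_one]
    rw [norm_map_ofReal_pow]
    rw [← h2]
    exact h1
  have hf := spectrum.pow_norm_pow_one_div_tendsto_nhds_spectralRadius A'
  have hdlim : Tendsto (fun k : ℕ => d ^ (1 / (k : ℝ))) atTop (𝓝 1) := by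
    have h1 : ContinuousAt (fun y : ℝ => d ^ y) 0 := Real.continuousAt_const_rpow hd0.ne'
    have h2 := h1.tendsto.comp tendsto_one_div_atTop_nhds_zero_nat
    simpa [Real.rpow_zero, Function.comp_def] using h2
  have hg : Tendsto (fun k : ℕ => ENNReal.ofReal (c * d ^ (1 / (k : ℝ)))) atTop
      (𝓝 (ENNReal.ofReal c)) := by
    have h1 : Tendsto (fun k : ℕ => c * d ^ (1 / (k : ℝ))) atTop (𝓝 (c * 1)) :=
      hdlim.const_mul c
    rw [mul_one] at h1
    exact (ENNReal.continuous_ofReal.continuousAt).tendsto.comp h1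
  have hle : ENNReal.ofReal c ≤ spectralRadius ℂ A' :=
    le_of_tendsto_of_tendsto hg hf
      (Filter.eventually_atTop.mpr ⟨1, fun k hk => ENNReal.ofReal_le_ofReal (hbound k hk)⟩)
  -- extract the witness
  have hσne : (spectrum ℂ A').Nonempty := spectrum.nonempty_of_isAlgClosed_of_finiteDimensional ℂ A'
  have hσfin : (spectrum ℂ A').Finite := A'.finite_spectrum
  have hmem : sSup ((fun z : ℂ => ‖z‖) '' spectrum ℂ A') ∈ (fun z : ℂ => ‖z‖) '' spectrum ℂ A' :=
    Set.Nonempty.csSup_mem (hσne.image _) (hσfin.image _)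
  obtain ⟨μ0, hμ0, hμ0eq⟩ := hmem
  refine ⟨μ0, hμ0, ?_⟩
  have hub : spectralRadius ℂ A' ≤ ENNReal.ofReal ‖μ0‖ := by
    rw [spectralRadius]
    refine iSup₂_le fun μ hμ => ?_
    rw [← ENNReal.ofReal_coe_nnreal, coe_nnnorm]
    refine ENNReal.ofReal_le_ofReal ?_
    simp only at hμ0eq
    rw [hμ0eq]
    exact le_csSup ((hσfin.image _).bddAbove) ⟨μ, hμ, rfl⟩
  have := hle.trans hub
  rwa [ENNReal.ofReal_le_ofReal_iff (norm_nonneg μ0)] at this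
end Subinv

section Irr
variable {n : ℕ}

open Finset in
lemma irr_pos (A : Matrix (Fin n) (Fin n) ℝ) (hA : ∀ i j, 0 ≤ A i j)
    (hirr : IsIrreducibleMatrix A) (y : Fin n → ℝ) (hy0 : 0 ≤ y) (hyne : y ≠ 0) :
    ∀ i, 0 < (((1 + A) ^ (n - 1)).mulVec y) i := by
  classical
  obtain ⟨i0, hi0⟩ : ∃ i, 0 < y i := by
    by_contra hcon
    push_neg at hcon
    exact hyne (le_antisymm (fun i => hcon i) hy0)
  set Y : ℕ → Fin n → ℝ := fun k => ((1 + A) ^ k).mulVec y with hY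
  have hstep : ∀ k, Y (k + 1) = Y k + A.mulVec (Y k) := by
    intro k
    rw [hY]
    simp only
    rw [pow_succ', ← Matrix.mulVec_mulVec, Matrix.add_mulVec, Matrix.one_mulVec]
  have hYnn : ∀ k, 0 ≤ Y k := by
    intro k
    induction k with
    | zero => simpa [hY, Matrix.one_mulVec] using hy0
    | succ m ih =>
      rw [hstep m]
      intro i
      exact add_nonneg (ih i) (mulVec_nonneg hA ih i)
  have hYmono : ∀ k, Y k ≤ Y (k + 1) := by
    intro k i
    rw [hstep k]
    have h1 : (0:ℝ) ≤ (A.mulVec (Y k)) i := mulVec_nonneg hA (hYnn k) i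
    simp only [Pi.add_apply]
    linarith
  have hYge : ∀ k, y ≤ Y k := by
    intro k
    induction k with
    | zero => simp [hY, Matrix.one_mulVec]
    | succ m ih => exact ih.trans (hYmono m)
  set S : ℕ → Finset (Fin n) := fun k => univ.filter (fun i => 0 < Y k i) with hS
  have hi0S : ∀ k, i0 ∈ S k := by
    intro k
    simp only [hS, mem_filter, mem_univ, true_and]
    exact lt_of_lt_of_le hi0 (hYge k i0)
  have hSmono : ∀ k, S k ⊆ S (k + 1) := by
    intro k i hi
    simp only [hS, mem_filter, mem_univ, true_and] at hi ⊢
    exact lt_of_lt_of_le hi (hYmono k i)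
  have hgrow : ∀ k, S k ≠ univ → ∃ i ∈ S (k + 1), i ∉ S k := by
    intro k hne
    obtain ⟨i, hiS, j, hjS, hAij⟩ := hirr (↑(S k) : Set (Fin n)) ⟨i0, by simpa using hi0S k⟩
      (fun h => hne (by rwa [← Finset.coe_univ, Finset.coe_inj] at h))
    rw [Finset.mem_coe] at hjS
    have hj : 0 < Y k j := by
      simpa [hS, mem_filter] using hjS
    have hsum : A i j * Y k j ≤ (A.mulVec (Y k)) i := by
      simp only [mulVec, dotProduct]
      exact Finset.single_le_sum (f := fun l => A i l * Y k l)
        (fun l _ => mul_nonneg (hA i l) (hYnn k l)) (mem_univ j)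
    have hpos : 0 < Y (k + 1) i := by
      rw [hstep k]
      have h1 : 0 < A i j * Y k j :=
        mul_pos (lt_of_le_of_ne (hA i j) (Ne.symm hAij)) hj
      have h2 : (0:ℝ) ≤ Y k i := hYnn k i
      simp only [Pi.add_apply]
      have h3 : A i j * Y k j ≤ (A.mulVec (Y k)) i := hsum
      linarith
    refine ⟨i, ?_, by simpa [Finset.mem_coe] using hiS⟩
    simp [hS, hpos]
  have hcard : ∀ k, min n (k + 1) ≤ (S k).card := by
    intro k
    induction k with
    | zero =>
      have : 0 < (S 0).card := Finset.card_pos.mpr ⟨i0, hi0S 0⟩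
      omega
    | succ m ih =>
      by_cases hu : S m = univ
      · have : S (m + 1) = univ := Finset.eq_univ_of_forall fun i => hSmono m (hu ▸ mem_univ i)
        rw [this, Finset.card_univ, Fintype.card_fin]
        omega
      · obtain ⟨i, hi1, hi2⟩ := hgrow m hu
        have hss : S m ⊂ S (m + 1) := ⟨hSmono m, fun h => hi2 (h hi1)⟩
        have := Finset.card_lt_card hss
        omega
  have hfin : S (n - 1) = univ := by
    apply Finset.eq_univ_of_card
    have h1 := hcard (n - 1)
    have h2 : (S (n - 1)).card ≤ n := by
      simpa using Finset.card_le_univ (S (n - 1))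
    have hn : 0 < n := i0.pos
    rw [Fintype.card_fin]
    omega
  intro i
  have : i ∈ S (n - 1) := hfin ▸ mem_univ i
  simpa [hS, mem_filter] using this
end Irr

section Perron
variable {n : ℕ}

lemma perron (A : Matrix (Fin n) (Fin n) ℝ) (hA : ∀ i j, 0 ≤ A i j)
    (hirr : IsIrreducibleMatrix A) (hn : 0 < n) :
    ∃ r : ℝ, 0 ≤ r ∧ (∀ μ ∈ spectrum ℂ (A.map Complex.ofReal), ‖μ‖ ≤ r) ∧
      ∃ x : Fin n → ℝ, (∀ i, 0 < x i) ∧ A.mulVec x = r • x := by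
  classical
  have i0 : Fin n := ⟨0, hn⟩
  haveI : Nonempty (Fin n) := ⟨i0⟩
  haveI : Nontrivial (Matrix (Fin n) (Fin n) ℂ) :=
    ⟨0, 1, fun h => by simpa [Matrix.one_apply_eq] using congrFun (congrFun h i0) i0⟩
  set A' := A.map (Complex.ofReal) with hA'
  have hσne : (spectrum ℂ A').Nonempty := spectrum.nonempty_of_isAlgClosed_of_finiteDimensional ℂ A'
  have hσfin : (spectrum ℂ A').Finite := A'.finite_spectrum
  set r := sSup ((fun z : ℂ => ‖z‖) '' spectrum ℂ A') with hr
  have hmax : ∀ μ ∈ spectrum ℂ A', ‖μ‖ ≤ r := fun μ hμ =>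
    le_csSup ((hσfin.image _).bddAbove) ⟨μ, hμ, rfl⟩
  obtain ⟨lam0, hlam0, hlam0eq⟩ : r ∈ (fun z : ℂ => ‖z‖) '' spectrum ℂ A' :=
    Set.Nonempty.csSup_mem (hσne.image _) (hσfin.image _)
  have hr0 : 0 ≤ r := by rw [← hlam0eq]; exact norm_nonneg lam0
  obtain ⟨v, hv0, hv⟩ := (matrix_mem_spectrum_iff A' lam0).mp hlam0
  set x0 : Fin n → ℝ := fun i => ‖v i‖ with hx0
  have hx00 : 0 ≤ x0 := fun i => norm_nonneg _
  have hx0ne : x0 ≠ 0 := by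
    intro h
    apply hv0
    ext i
    have : ‖v i‖ = 0 := congrFun h i
    simpa using this
  have hsub : r • x0 ≤ A.mulVec x0 := by
    intro i
    have h1 : ((A'.mulVec v) i) = ∑ j, (A i j : ℂ) * v j := by
      simp [Matrix.mulVec, dotProduct, Matrix.map_apply, hA']
    have h2 : ‖(A'.mulVec v) i‖ = r * x0 i := by
      rw [hv]
      simp only [Pi.smul_apply, smul_eq_mul, norm_mul]
      exact congrArg (· * x0 i) hlam0eq
    have h3 : ‖∑ j, (A i j : ℂ) * v j‖ ≤ ∑ j, A i j * x0 j := by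
      refine (norm_sum_le _ _).trans ?_
      refine Finset.sum_le_sum fun j _ => ?_
      rw [norm_mul, Complex.norm_real, Real.norm_of_nonneg (hA i j)]
    calc (r • x0) i = r * x0 i := rfl
      _ = ‖(A'.mulVec v) i‖ := h2.symm
      _ = ‖∑ j, (A i j : ℂ) * v j‖ := by rw [h1]
      _ ≤ ∑ j, A i j * x0 j := h3
      _ = (A.mulVec x0) i := rfl
  set y : Fin n → ℝ := A.mulVec x0 - r • x0 with hy
  have hy0 : 0 ≤ y := by
    intro i
    simp only [hy, Pi.sub_apply, Pi.zero_apply]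
    linarith [hsub i]
  by_cases hyz : y = 0
  · -- x0 is an eigenvector
    have hAx : A.mulVec x0 = r • x0 := by
      have := sub_eq_zero.mp hyz
      exact this
    have hzpos := irr_pos A hA hirr x0 hx00 hx0ne
    have hzeq : ∀ k : ℕ, ((1 + A) ^ k).mulVec x0 = (1 + r) ^ k • x0 := by
      intro k
      induction k with
      | zero => simp [Matrix.one_mulVec]
      | succ m ih =>
        rw [pow_succ', ← Matrix.mulVec_mulVec, ih, Matrix.mulVec_smul, Matrix.add_mulVec,
          Matrix.one_mulVec, hAx, pow_succ']
        ext i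
        simp only [Pi.smul_apply, Pi.add_apply, smul_eq_mul]
        ring
    have hx0pos : ∀ i, 0 < x0 i := by
      intro i
      have h1 := hzpos i
      rw [hzeq (n - 1)] at h1
      simp only [Pi.smul_apply, smul_eq_mul] at h1
      have hp : (0:ℝ) < (1 + r) ^ (n - 1) := pow_pos (by linarith) _
      rcases mul_pos_iff.mp h1 with ⟨_, h⟩ | ⟨h, _⟩
      · exact h
      · linarith
    exact ⟨r, hr0, hmax, x0, hx0pos, hAx⟩
  · -- contradiction case
    exfalso
    set z := ((1 + A) ^ (n - 1)).mulVec x0 with hz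
    set w := ((1 + A) ^ (n - 1)).mulVec y with hw
    have hzpos : ∀ i, 0 < z i := irr_pos A hA hirr x0 hx00 hx0ne
    have hwpos : ∀ i, 0 < w i := irr_pos A hA hirr y hy0 hyz
    have hcomm : A * (1 + A) ^ (n - 1) = (1 + A) ^ (n - 1) * A := by
      have h1 : Commute A (1 + A) := (Commute.one_right A).add_right (Commute.refl A)
      exact (h1.pow_right (n - 1)).eq
    have hAx0 : A.mulVec x0 = y + r • x0 := by
      rw [hy]; ext i; simp
    have hAz : A.mulVec z = r • z + w := by
      rw [hz, Matrix.mulVec_mulVec, hcomm, ← Matrix.mulVec_mulVec, hAx0,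
        Matrix.mulVec_add, Matrix.mulVec_smul]
      ext i
      simp only [Pi.add_apply, Pi.smul_apply, hw]
      ring
    set ε := Finset.univ.inf' ⟨i0, Finset.mem_univ i0⟩ (fun i => w i / z i) with hε
    have hεpos : 0 < ε := by
      rw [hε]
      exact (Finset.lt_inf'_iff _).mpr fun i _ => div_pos (hwpos i) (hzpos i)
    have hεle : ∀ i, ε * z i ≤ w i := by
      intro i
      have h1 : ε ≤ w i / z i := Finset.inf'_le _ (Finset.mem_univ i)
      rwa [le_div_iff₀ (hzpos i)] at h1
    have hsub2 : (r + ε) • z ≤ A.mulVec z := by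
      intro i
      have h1 := hεle i
      have h2 : (A.mulVec z) i = r * z i + w i := by
        rw [hAz]; simp
      simp only [Pi.smul_apply, smul_eq_mul, h2]
      nlinarith [hzpos i]
    obtain ⟨μ, hμ, hμge⟩ := exists_spectrum_abs_ge A hA (r + ε) (by linarith)
      z (fun i => (hzpos i).le) (fun h => (hzpos i0).ne' (by simpa using congrFun h i0)) hsub2
    have := hmax μ hμ
    linarith
end Perron

/-- For `M = Λ + N` with `Λ` negative diagonal and `N` irreducible nonnegative:
`σ(M) < 0` iff `ρ(-Λ⁻¹N) < 1`. -/
theorem spectralAbscissa_neg_iff_spectralRadius_lt_one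
    (n : ℕ) (hn : 0 < n) (lam : Fin n → ℝ) (hlam : ∀ i, lam i < 0)
    (N : Matrix (Fin n) (Fin n) ℝ) (hN : ∀ i j, 0 ≤ N i j)
    (hNirr : IsIrreducibleMatrix N) :
    spectralAbscissa (Matrix.diagonal lam + N) < 0
      ↔ spectralRadius' (-(Matrix.diagonal lam)⁻¹ * N) < 1 := by
  classical
  have i0 : Fin n := ⟨0, hn⟩
  haveI : Nonempty (Fin n) := ⟨i0⟩
  haveI : Nontrivial (Matrix (Fin n) (Fin n) ℂ) :=
    ⟨0, 1, fun h => by simpa [Matrix.one_apply_eq] using congrFun (congrFun h i0) i0⟩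
  set M := Matrix.diagonal lam + N with hM
  set B := -(Matrix.diagonal lam)⁻¹ * N with hB
  have hlamne : ∀ i, lam i ≠ 0 := fun i => (hlam i).ne
  have hinv : (Matrix.diagonal lam)⁻¹ = Matrix.diagonal (fun i => (lam i)⁻¹) := by
    apply Matrix.inv_eq_right_inv
    rw [Matrix.diagonal_mul_diagonal]
    have : (fun i => lam i * (lam i)⁻¹) = fun _ => (1:ℝ) := by
      ext i
      exact mul_inv_cancel₀ (hlamne i)
    rw [this, Matrix.diagonal_one]
  have hBentry : ∀ i j, B i j = (-(lam i))⁻¹ * N i j := by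
    intro i j
    rw [hB, hinv, Matrix.neg_mul, Matrix.neg_apply, Matrix.diagonal_mul, ← neg_mul, neg_inv]
  have hBnn : ∀ i j, 0 ≤ B i j := by
    intro i j
    rw [hBentry]
    have h1 : 0 < -lam i := neg_pos.mpr (hlam i)
    exact mul_nonneg (inv_nonneg.mpr (by linarith)) (hN i j)
  have hBirr : IsIrreducibleMatrix B := by
    intro S hS1 hS2
    obtain ⟨i, hiS, j, hjS, hNij⟩ := hNirr S hS1 hS2
    refine ⟨i, hiS, j, hjS, ?_⟩
    rw [hBentry]
    have h1 : (-(lam i))⁻¹ ≠ 0 := inv_ne_zero (by simpa using hlamne i)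
    exact mul_ne_zero h1 hNij
  have hBvec : ∀ (x : Fin n → ℝ) (i : Fin n), (B.mulVec x) i = (-(lam i))⁻¹ * (N.mulVec x) i := by
    intro x i
    simp only [Matrix.mulVec, dotProduct, Finset.mul_sum]
    exact Finset.sum_congr rfl fun j _ => by rw [hBentry]; ring
  have hMvec : ∀ (v : Fin n → ℂ) (i : Fin n),
      ((M.map Complex.ofReal).mulVec v) i = (lam i : ℂ) * v i + ((N.map Complex.ofReal).mulVec v) i := by
    intro v i
    have hMmap : M.map Complex.ofReal =
        Matrix.diagonal (fun i => (lam i : ℂ)) + N.map Complex.ofReal := by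
      ext i j
      by_cases h : i = j
      · subst h; simp [hM, Matrix.map_apply, Matrix.add_apply]
      · simp [hM, Matrix.map_apply, Matrix.add_apply, Matrix.diagonal_apply_ne _ h]
    rw [hMmap, Matrix.add_mulVec]
    simp [Matrix.mulVec_diagonal]
  -- spectra
  have hσMne : (spectrum ℂ (M.map Complex.ofReal)).Nonempty :=
    spectrum.nonempty_of_isAlgClosed_of_finiteDimensional ℂ _
  have hσMfin : (spectrum ℂ (M.map Complex.ofReal)).Finite := Matrix.finite_spectrum _
  have hσBne : (spectrum ℂ (B.map Complex.ofReal)).Nonempty :=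
    spectrum.nonempty_of_isAlgClosed_of_finiteDimensional ℂ _
  have hσBfin : (spectrum ℂ (B.map Complex.ofReal)).Finite := Matrix.finite_spectrum _
  constructor
  · -- σ(M) < 0 → ρ(B) < 1
    intro h
    by_contra hcon
    push_neg at hcon
    obtain ⟨r, hr0, hmaxB, x, hxpos, hBx⟩ := perron B hBnn hBirr hn
    have hr1 : 1 ≤ r := by
      have h1 : spectralRadius' B ≤ r :=
        csSup_le (hσBne.image _) (by rintro - ⟨μ, hμ, rfl⟩; exact hmaxB μ hμ)
      linarith
    have hNx : ∀ i, (N.mulVec x) i = r * (-lam i) * x i := by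
      intro i
      have h1 : (B.mulVec x) i = r * x i := by rw [hBx]; rfl
      rw [hBvec x i] at h1
      have h2 : -lam i ≠ 0 := by simpa using hlamne i
      rw [← mul_inv_cancel_left₀ h2 ((N.mulVec x) i), h1]
      ring
    set c := Finset.univ.sup' ⟨i0, Finset.mem_univ i0⟩ (fun i => -lam i) with hc
    have hcle : ∀ i, -lam i ≤ c := fun i => by simpa [hc] using Finset.le_sup' (fun i => -lam i) (Finset.mem_univ i)
    have hcpos : 0 < c := lt_of_lt_of_le (neg_pos.mpr (hlam i0)) (hcle i0)
    set Ar := M + c • (1 : Matrix (Fin n) (Fin n) ℝ) with hAr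
    have hArentry : ∀ i j, Ar i j = M i j + (if i = j then c else 0) := by
      intro i j
      rw [hAr]
      by_cases h' : i = j
      · subst h'; simp [Matrix.add_apply, Matrix.smul_apply, Matrix.one_apply_eq]
      · simp [Matrix.add_apply, Matrix.smul_apply, Matrix.one_apply_ne h', h']
    have hAnn : ∀ i j, 0 ≤ Ar i j := by
      intro i j
      rw [hArentry]
      by_cases h' : i = j
      · subst h'
        simp only [hM, Matrix.add_apply, Matrix.diagonal_apply_eq, if_pos rfl, if_true]
        have := hcle i
        have := hN i i
        linarith
      · simp only [hM, Matrix.add_apply, Matrix.diagonal_apply_ne _ h', if_neg h']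
        have := hN i j
        linarith
    have hAirr : IsIrreducibleMatrix Ar := by
      intro S hS1 hS2
      obtain ⟨i, hiS, j, hjS, hNij⟩ := hNirr S hS1 hS2
      refine ⟨i, hiS, j, hjS, ?_⟩
      have hne : i ≠ j := fun h' => hiS (h' ▸ hjS)
      rw [hArentry, if_neg hne]
      simpa [hM, Matrix.add_apply, Matrix.diagonal_apply_ne _ hne] using hNij
    have hAx : c • x ≤ Ar.mulVec x := by
      intro i
      have h1 : (Ar.mulVec x) i = (M.mulVec x) i + c * x i := by
        rw [hAr, Matrix.add_mulVec, Matrix.smul_mulVec, Matrix.one_mulVec]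
        simp
      have h2 : (M.mulVec x) i = lam i * x i + (N.mulVec x) i := by
        rw [hM, Matrix.add_mulVec]
        simp [Matrix.mulVec_diagonal]
      have h3 := hNx i
      have h4 : 0 < -lam i := neg_pos.mpr (hlam i)
      have h5 := hxpos i
      simp only [Pi.smul_apply, smul_eq_mul, h1, h2, h3]
      nlinarith [mul_nonneg (mul_nonneg (sub_nonneg.mpr hr1) h4.le) h5.le]
    obtain ⟨μ, hμA, hμge⟩ := exists_spectrum_abs_ge Ar hAnn c hcpos.le x
      (fun i => (hxpos i).le) (fun h' => (hxpos i0).ne' (by simpa using congrFun h' i0)) hAx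
    obtain ⟨rA, hrA0, hmaxA, xA, hxApos, hAxA⟩ := perron Ar hAnn hAirr hn
    have hrAc : c ≤ rA := hμge.trans (hmaxA μ hμA)
    have hMxA : M.mulVec xA = (rA - c) • xA := by
      have h1 : (M + c • (1 : Matrix (Fin n) (Fin n) ℝ)).mulVec xA = rA • xA := hAxA
      rw [Matrix.add_mulVec, Matrix.smul_mulVec, Matrix.one_mulVec] at h1
      ext i
      have := congrFun h1 i
      simp only [Pi.add_apply, Pi.smul_apply, smul_eq_mul] at this ⊢
      linarith
    have hmem : ((rA - c : ℝ) : ℂ) ∈ spectrum ℂ (M.map Complex.ofReal) :=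
      real_eig_mem_spectrum M (rA - c) xA
        (fun h' => (hxApos i0).ne' (by simpa using congrFun h' i0)) hMxA
    have hge : (rA - c : ℝ) ≤ spectralAbscissa M := by
      apply le_csSup ((hσMfin.image _).bddAbove)
      exact ⟨_, hmem, by simp⟩
    linarith
  · -- ρ(B) < 1 → σ(M) < 0
    intro h
    by_contra hcon
    push_neg at hcon
    have hmem : spectralAbscissa M ∈ Complex.re '' spectrum ℂ (M.map Complex.ofReal) :=
      Set.Nonempty.csSup_mem (hσMne.image _) (hσMfin.image _)
    obtain ⟨lam1, hlam1, hlam1eq⟩ := hmem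
    have hre : 0 ≤ lam1.re := by rw [hlam1eq]; exact hcon
    obtain ⟨v, hv0, hv⟩ := (matrix_mem_spectrum_iff _ lam1).mp hlam1
    set x : Fin n → ℝ := fun i => ‖v i‖ with hx
    have hx0 : 0 ≤ x := fun i => norm_nonneg _
    have hxne : x ≠ 0 := by
      intro h'
      apply hv0
      ext i
      have h2 : ‖v i‖ = 0 := by simpa [hx] using congrFun h' i
      simpa using h2
    have hsub : (1 : ℝ) • x ≤ B.mulVec x := by
      intro i
      have h1 : ((N.map Complex.ofReal).mulVec v) i = (lam1 - (lam i : ℂ)) * v i := by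
        have h2 := congrFun hv i
        rw [hMvec v i] at h2
        simp only [Pi.smul_apply, smul_eq_mul] at h2
        linear_combination h2
      have h3 : ((N.map Complex.ofReal).mulVec v) i = ∑ j, (N i j : ℂ) * v j := by
        simp [Matrix.mulVec, dotProduct, Matrix.map_apply]
      have h4 : ‖lam1 - (lam i : ℂ)‖ * x i ≤ (N.mulVec x) i := by
        rw [← norm_mul, ← h1, h3]
        refine (norm_sum_le _ _).trans ?_
        refine le_of_eq (Finset.sum_congr rfl fun j _ => ?_)
        rw [norm_mul, Complex.norm_real, Real.norm_of_nonneg (hN i j)]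
      have h5 : -lam i ≤ ‖lam1 - (lam i : ℂ)‖ := by
        have := Complex.re_le_norm (lam1 - (lam i : ℂ))
        simp only [Complex.sub_re, Complex.ofReal_re] at this
        linarith
      have h6 : (-lam i) * x i ≤ (N.mulVec x) i := by
        have := mul_le_mul_of_nonneg_right h5 (hx0 i)
        linarith
      rw [hBvec x i]
      have h7 : 0 < -lam i := neg_pos.mpr (hlam i)
      have h8 : (0:ℝ) < (-lam i)⁻¹ := inv_pos.mpr h7
      have h9 : (-(lam i))⁻¹ * ((-lam i) * x i) ≤ (-(lam i))⁻¹ * (N.mulVec x) i :=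
        mul_le_mul_of_nonneg_left h6 h8.le
      rw [inv_mul_cancel_left₀ (by simpa using hlamne i)] at h9
      simpa using h9
    obtain ⟨μ, hμ, hμge⟩ := exists_spectrum_abs_ge B hBnn 1 zero_le_one x hx0 hxne hsub
    have : (1:ℝ) ≤ spectralRadius' B := by
      refine hμge.trans (le_csSup ((hσBfin.image _).bddAbove) ⟨μ, hμ, rfl⟩)
    linarith
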